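/- ∑_{n=2}^∞ arctanh(1/n²) = (1/2)·ln(sinh(π)/π). -/

import Mathlib

open Real Filter Finset Topology

noncomputable def arctanh (x : ℝ) : ℝ := (1/2) * Real.log ((1 + x) / (1 - x))

lemma sinh_prod :
    Tendsto (fun n : ℕ => ∏ j ∈ Finset.range n, ((1 : ℝ) + (((j : ℝ) + 1) ^ 2)⁻¹))
      atTop (𝓝 (Real.sinh π / π)) := by
  have h := Complex.tendsto_euler_sin_prod Complex.I
  have hne : (π : ℂ) * Complex.I ≠ 0 := by
    simp [Real.pi_ne_zero, Complex.I_ne_zero, Complex.ofReal_ne_zero]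
  have h2 := h.const_mul (((π : ℂ) * Complex.I)⁻¹)
  have h3 : Tendsto (fun n : ℕ => ∏ j ∈ Finset.range n,
      ((1 : ℂ) - Complex.I ^ 2 / ((j : ℂ) + 1) ^ 2)) atTop
      (𝓝 (((π : ℂ) * Complex.I)⁻¹ * Complex.sin (π * Complex.I))) := by
    refine h2.congr fun n => ?_
    field_simp
  have hval : ((π : ℂ) * Complex.I)⁻¹ * Complex.sin (π * Complex.I)
      = ((Real.sinh π / π : ℝ) : ℂ) := by
    rw [Complex.sin_mul_I, ← Complex.ofReal_sinh, Complex.ofReal_div]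
    have hpi : ((π : ℝ) : ℂ) ≠ 0 := Complex.ofReal_ne_zero.2 Real.pi_ne_zero
    field_simp [Complex.I_ne_zero]
  rw [hval] at h3
  have h4 := (Complex.continuous_re.tendsto _).comp h3
  simp only [Complex.ofReal_re] at h4
  refine h4.congr fun n => ?_
  simp only [Function.comp_apply]
  have : (∏ j ∈ Finset.range n, ((1 : ℂ) - Complex.I ^ 2 / ((j : ℂ) + 1) ^ 2))
      = ((∏ j ∈ Finset.range n, ((1 : ℝ) + (((j : ℝ) + 1) ^ 2)⁻¹) : ℝ) : ℂ) := by
    push_cast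
    refine Finset.prod_congr rfl fun j _ => ?_
    rw [Complex.I_sq]
    ring
  rw [this, Complex.ofReal_re]

lemma prod_num :
    Tendsto (fun N : ℕ => ∏ n ∈ Finset.range N, ((1 : ℝ) + ((((n : ℝ)) + 2) ^ 2)⁻¹))
      atTop (𝓝 (Real.sinh π / π / 2)) := by
  have h := sinh_prod.comp (tendsto_add_atTop_nat 1)
  have key : ∀ N : ℕ, ∏ j ∈ Finset.range (N + 1), ((1 : ℝ) + (((j : ℝ) + 1) ^ 2)⁻¹)
      = (∏ n ∈ Finset.range N, ((1 : ℝ) + (((n : ℝ) + 2) ^ 2)⁻¹)) * 2 := by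
    intro N
    rw [Finset.prod_range_succ']
    norm_num
    refine Finset.prod_congr rfl fun j _ => by ring_nf
  have h2 : Tendsto (fun N : ℕ => (∏ n ∈ Finset.range N,
      ((1 : ℝ) + ((((n : ℝ)) + 2) ^ 2)⁻¹)) * 2) atTop (𝓝 (Real.sinh π / π)) := by
    refine h.congr fun N => ?_
    simp only [Function.comp_apply]
    exact key N
  have h3 := h2.div_const 2
  refine h3.congr fun N => ?_
  rw [mul_div_assoc]
  norm_num

lemma prod_den (N : ℕ) :
    ∏ n ∈ Finset.range N, ((1 : ℝ) - ((((n : ℝ)) + 2) ^ 2)⁻¹)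
      = ((N : ℝ) + 2) / (2 * ((N : ℝ) + 1)) := by
  induction N with
  | zero => norm_num
  | succ n ih =>
    rw [Finset.prod_range_succ, ih]
    have h1 : ((n : ℝ) + 1) ≠ 0 := by positivity
    have h2 : ((n : ℝ) + 2) ≠ 0 := by positivity
    have h3 : ((n : ℝ) + 3) ≠ 0 := by positivity
    push_cast
    field_simp
    ring

lemma prod_den_tendsto :
    Tendsto (fun N : ℕ => ∏ n ∈ Finset.range N, ((1 : ℝ) - ((((n : ℝ)) + 2) ^ 2)⁻¹))
      atTop (𝓝 (1/2)) := by
  simp only [prod_den]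
  have h0 : Tendsto (fun N : ℕ => 1 / ((N : ℝ) + 1)) atTop (𝓝 (0 : ℝ)) :=
    tendsto_one_div_add_atTop_nhds_zero_nat
  have h : Tendsto (fun N : ℕ => (1/2 : ℝ) * (1 + 1 / ((N : ℝ) + 1)))
      atTop (𝓝 ((1/2 : ℝ) * (1 + 0))) :=
    (tendsto_const_nhds.add h0).const_mul _
  norm_num at h
  refine h.congr fun N => ?_
  have h1 : ((N : ℝ) + 1) ≠ 0 := by positivity
  field_simp
  ring

theorem sum_arctanh_inv_sq :
    ∑' n : ℕ, arctanh ((((n : ℝ) + 2) ^ 2)⁻¹) =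
      (1/2) * Real.log (Real.sinh Real.pi / Real.pi) := by
  have ha : ∀ n : ℕ, (0 : ℝ) < ((((n : ℝ)) + 2) ^ 2)⁻¹ ∧ ((((n : ℝ)) + 2) ^ 2)⁻¹ < 1 := by
    intro n
    constructor
    · positivity
    · rw [inv_lt_one_iff₀]
      right
      nlinarith [Nat.cast_nonneg (α := ℝ) n]
  have hnum : ∀ n : ℕ, (0 : ℝ) < 1 + ((((n : ℝ)) + 2) ^ 2)⁻¹ := fun n => by linarith [(ha n).1]
  have hden : ∀ n : ℕ, (0 : ℝ) < 1 - ((((n : ℝ)) + 2) ^ 2)⁻¹ := fun n => by linarith [(ha n).2]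
  have hr : ∀ n : ℕ, (1 : ℝ) ≤ (1 + ((((n : ℝ)) + 2) ^ 2)⁻¹) / (1 - ((((n : ℝ)) + 2) ^ 2)⁻¹) := by
    intro n
    rw [le_div_iff₀ (hden n)]
    linarith [(ha n).1]
  have hnonneg : ∀ n : ℕ, 0 ≤ arctanh ((((n : ℝ)) + 2) ^ 2)⁻¹ := by
    intro n
    unfold arctanh
    have := Real.log_nonneg (hr n)
    linarith
  -- partial sums
  have hps : ∀ N : ℕ, ∑ n ∈ Finset.range N, arctanh ((((n : ℝ)) + 2) ^ 2)⁻¹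
      = (1/2) * Real.log ((∏ n ∈ Finset.range N, ((1 : ℝ) + ((((n : ℝ)) + 2) ^ 2)⁻¹))
        / (∏ n ∈ Finset.range N, ((1 : ℝ) - ((((n : ℝ)) + 2) ^ 2)⁻¹))) := by
    intro N
    unfold arctanh
    rw [← Finset.mul_sum]
    congr 1
    rw [← Finset.prod_div_distrib, Real.log_prod]
    intro i _
    exact div_ne_zero (hnum i).ne' (hden i).ne'
  have hprod : Tendsto (fun N : ℕ =>
      (∏ n ∈ Finset.range N, ((1 : ℝ) + ((((n : ℝ)) + 2) ^ 2)⁻¹))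
        / (∏ n ∈ Finset.range N, ((1 : ℝ) - ((((n : ℝ)) + 2) ^ 2)⁻¹)))
      atTop (𝓝 (Real.sinh π / π)) := by
    have := prod_num.div prod_den_tendsto (by norm_num)
    convert this using 2
    · rfl
    · ring
  have hpos : 0 < Real.sinh π / π := div_pos (Real.sinh_pos_iff.2 Real.pi_pos) Real.pi_pos
  have hlog : Tendsto (fun N : ℕ => ∑ n ∈ Finset.range N, arctanh ((((n : ℝ)) + 2) ^ 2)⁻¹)
      atTop (𝓝 ((1/2) * Real.log (Real.sinh π / π))) := by
    simp only [hps]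
    exact (((Real.continuousAt_log hpos.ne').tendsto.comp hprod).const_mul _)
  have hs : HasSum (fun n : ℕ => arctanh ((((n : ℝ)) + 2) ^ 2)⁻¹)
      ((1/2) * Real.log (Real.sinh π / π)) := by
    rw [hasSum_iff_tendsto_nat_of_nonneg hnonneg]
    exact hlog
  exact hs.tsum_eq
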